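/- Let h ∈ L²(Ω) be nonnegative with ∫_Ω h ≤ 1, and let u ∈ Y^s_0(Ω) be a nonnegative weak solution of L_K u + V u = h in Ω. Then for every p ∈ [1, n/(n−2s)) there exists a constant C > 0 depending only on p, λ, n, s (independent of Ω, u, h, V, x₀, r) such that ‖u‖_{L^p(B_r(x₀))} ≤ C r^{n/p − (n−2s)} for every x₀ ∈ ℝⁿ and every r > 0. -/

import Mathlib

open MeasureTheory Real Filter
open scoped ENNReal RealInnerProductSpace

noncomputable section

/-- Euclidean space ℝⁿ. -/
abbrev En (n : ℕ) := EuclideanSpace ℝ (Fin n)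

/-- The squared Gagliardo seminorm `[u]_s²`. -/
def gagliardoSq (n : ℕ) (s : ℝ) (u : En n → ℝ) : ℝ≥0∞ :=
  ∫⁻ p : En n × En n,
    ENNReal.ofReal ((u p.1 - u p.2) ^ 2 * ‖p.1 - p.2‖ ^ (-((n : ℝ) + 2 * s)))

/-- `K` is a symmetric measurable kernel comparable to `c⬝|y|^{-(n+2s)}`
with ellipticity constants `lam ≤ Lam`. -/
def IsKernel (n : ℕ) (s lam Lam c : ℝ) (K : En n → ℝ) : Prop :=
  Measurable K ∧ (∀ y : En n, K (-y) = K y) ∧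
    ∀ y : En n, y ≠ 0 →
      lam * c * ‖y‖ ^ (-((n : ℝ) + 2 * s)) ≤ K y ∧
        K y ≤ Lam * c * ‖y‖ ^ (-((n : ℝ) + 2 * s))

/-- The nonlocal operator `L_K` applied to a test function. -/
def LK (n : ℕ) (K φ : En n → ℝ) (x : En n) : ℝ :=
  (1 / 2) * ∫ y : En n, (2 * φ x - φ (x + y) - φ (x - y)) * K y

/-- `V ∈ L^q_loc(ℝⁿ)`. -/
def LocLq (n : ℕ) (q : ℝ) (V : En n → ℝ) : Prop :=
  ∀ A : Set (En n), IsCompact A → MemLp V (ENNReal.ofReal q) (volume.restrict A)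

/-- The space `X^s_0(Ω)`: measurable functions vanishing a.e. outside `Ω`
with finite Gagliardo seminorm. -/
def Xs0 (n : ℕ) (s : ℝ) (Ω : Set (En n)) : Set (En n → ℝ) :=
  {u | Measurable u ∧ (∀ᵐ x : En n ∂volume, x ∉ Ω → u x = 0) ∧ gagliardoSq n s u < ⊤}

/-- `∫_Ω V u²`. -/
def VIntSq (n : ℕ) (V : En n → ℝ) (Ω : Set (En n)) (u : En n → ℝ) : ℝ≥0∞ :=
  ∫⁻ x in Ω, ENNReal.ofReal (V x * u x ^ 2)

/-- The space `Y^s_0(Ω) = X^s_0(Ω) ∩ L²_V(Ω)`. -/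
def Ys0 (n : ℕ) (s : ℝ) (Ω : Set (En n)) (V : En n → ℝ) : Set (En n → ℝ) :=
  {u | u ∈ Xs0 n s Ω ∧ VIntSq n V Ω u < ⊤}

/-- The squared `Y^s_0(Ω)` norm: `[u]_s² + ∫_Ω V u²`. -/
def YnormSq (n : ℕ) (s : ℝ) (Ω : Set (En n)) (V : En n → ℝ) (u : En n → ℝ) : ℝ≥0∞ :=
  gagliardoSq n s u + VIntSq n V Ω u

/-- The kernel quadratic form `∬ (u(x)-u(y))² K(x-y) dx dy` (as an `ℝ≥0∞`-integral). -/
def kerSq (n : ℕ) (K : En n → ℝ) (u : En n → ℝ) : ℝ≥0∞ :=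
  ∫⁻ p : En n × En n, ENNReal.ofReal ((u p.1 - u p.2) ^ 2 * K (p.1 - p.2))

/-- The bilinear form `(1/2)∬ (u(x)-u(y))(φ(x)-φ(y)) K(x-y) dx dy`. -/
def bilin (n : ℕ) (K : En n → ℝ) (u φ : En n → ℝ) : ℝ :=
  (1 / 2) * ∫ p : En n × En n, (u p.1 - u p.2) * (φ p.1 - φ p.2) * K (p.1 - p.2)

/-- The energy functional `E_V`. -/
def energy (n : ℕ) (K V f : En n → ℝ) (Ω : Set (En n)) (v : En n → ℝ) : ℝ :=
  (1 / 2) * (kerSq n K v).toReal + (VIntSq n V Ω v).toReal - 2 * ∫ x in Ω, f x * v x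

/-- The region `ℝ^{2n}_Ω = (ℝⁿ×ℝⁿ) \ (Ωᶜ×Ωᶜ)`. -/
def R2n (n : ℕ) (Ω : Set (En n)) : Set (En n × En n) := (Ωᶜ ×ˢ Ωᶜ)ᶜ

/-- The squared Gagliardo seminorm restricted to `ℝ^{2n}_Ω`. -/
def gagliardoSqOn (n : ℕ) (s : ℝ) (Ω : Set (En n)) (u : En n → ℝ) : ℝ≥0∞ :=
  ∫⁻ p in R2n n Ω,
    ENNReal.ofReal ((u p.1 - u p.2) ^ 2 * ‖p.1 - p.2‖ ^ (-((n : ℝ) + 2 * s)))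

/-- The kernel quadratic form restricted to `ℝ^{2n}_Ω`. -/
def kerSqOn (n : ℕ) (Ω : Set (En n)) (K : En n → ℝ) (u : En n → ℝ) : ℝ≥0∞ :=
  ∫⁻ p in R2n n Ω, ENNReal.ofReal ((u p.1 - u p.2) ^ 2 * K (p.1 - p.2))

/-- The bilinear form restricted to `ℝ^{2n}_Ω`. -/
def bilinOn (n : ℕ) (Ω : Set (En n)) (K : En n → ℝ) (u φ : En n → ℝ) : ℝ :=
  (1 / 2) * ∫ p in R2n n Ω, (u p.1 - u p.2) * (φ p.1 - φ p.2) * K (p.1 - p.2)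

/-- The energy functional `E_V` with the double integral over `ℝ^{2n}_Ω`. -/
def energyOn (n : ℕ) (Ω : Set (En n)) (K V f : En n → ℝ) (v : En n → ℝ) : ℝ :=
  (1 / 2) * (kerSqOn n Ω K v).toReal + (VIntSq n V Ω v).toReal - 2 * ∫ x in Ω, f x * v x


lemma min_sq_le (a b t : ℝ) : (min a t - min b t)^2 ≤ (a-b) * (min a t - min b t) := by
  rcases le_total a t with h1 | h1 <;> rcases le_total b t with h2 | h2 <;>
    simp [min_eq_left, min_eq_right, h1, h2] <;> nlinarith

lemma min_mul_le (a b t : ℝ) : (a-b) * (min a t - min b t) ≤ (a-b)^2 := by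
  rcases le_total a t with h1 | h1 <;> rcases le_total b t with h2 | h2 <;>
    simp [min_eq_left, min_eq_right, h1, h2] <;> nlinarith

lemma min_sq_le_sq (a b t : ℝ) : (min a t - min b t)^2 ≤ (a-b)^2 :=
  le_trans (min_sq_le a b t) (min_mul_le a b t)

lemma gagliardoSq_min_le (n : ℕ) (s t : ℝ) (u : En n → ℝ) :
    gagliardoSq n s (fun x => min (u x) t) ≤ gagliardoSq n s u := by
  refine lintegral_mono fun p => ENNReal.ofReal_le_ofReal ?_
  exact mul_le_mul_of_nonneg_right (min_sq_le_sq _ _ _) (Real.rpow_nonneg (norm_nonneg _) _)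

lemma min_mem_Ys0 (n : ℕ) (s : ℝ) (Ω : Set (En n)) (V : En n → ℝ) (hVpos : ∀ x, 0 ≤ V x)
    (u : En n → ℝ) (hu : u ∈ Ys0 n s Ω V) (t : ℝ) (ht : 0 < t) :
    (fun x => min (u x) t) ∈ Ys0 n s Ω V := by
  obtain ⟨⟨hmeas, hzero, hgag⟩, hV⟩ := hu
  refine ⟨⟨hmeas.min measurable_const, ?_, lt_of_le_of_lt (gagliardoSq_min_le n s t u) hgag⟩, ?_⟩
  · filter_upwards [hzero] with x hx hxΩ
    simp [hx hxΩ, min_eq_left ht.le]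
  · refine lt_of_le_of_lt (lintegral_mono fun x => ENNReal.ofReal_le_ofReal ?_) hV
    have h2 : (min (u x) t)^2 ≤ (u x)^2 := by
      have := min_sq_le_sq (u x) 0 t
      simpa [min_eq_left ht.le] using this
    exact mul_le_mul_of_nonneg_left h2 (hVpos x)


lemma measurable_rpow_fun (c : ℝ) : Measurable fun x : ℝ => x ^ c := by measurability

lemma energy_est (n : ℕ) (s : ℝ) (lam Lam c : ℝ) (hlam : 0 < lam) (hc : 0 < c)
    (hLam : lam ≤ Lam)
    (K : En n → ℝ) (hK : IsKernel n s lam Lam c K)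
    (V : En n → ℝ) (hVpos : ∀ x, 0 ≤ V x)
    (Ω : Set (En n)) (hΩb : Bornology.IsBounded Ω)
    (h : En n → ℝ) (hh2 : MemLp h 2 (volume.restrict Ω))
    (hh0 : ∀ᵐ x ∂volume.restrict Ω, 0 ≤ h x) (hh1 : (∫ x in Ω, h x) ≤ 1)
    (u : En n → ℝ) (hu : u ∈ Ys0 n s Ω V) (hu0 : ∀ᵐ x : En n ∂volume, 0 ≤ u x)
    (hweak : ∀ φ ∈ Ys0 n s Ω V,
      bilin n K u φ + ∫ x in Ω, V x * u x * φ x = ∫ x in Ω, h x * φ x)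
    (τ : ℝ) (hτ : 0 < τ) :
    gagliardoSq n s (fun x => min (u x) τ) ≤ ENNReal.ofReal (2 * τ / (lam * c)) := by
  obtain ⟨hKm, -, hKbd⟩ := hK
  have hlc : (0:ℝ) < lam * c := mul_pos hlam hc
  have hLc : (0:ℝ) ≤ Lam * c := le_of_lt (mul_pos (lt_of_lt_of_le hlam hLam) hc)
  set v : En n → ℝ := fun x => min (u x) τ with hv_def
  set w : En n × En n → ℝ := fun p => ‖p.1 - p.2‖ ^ (-((n : ℝ) + 2 * s)) with hw_def
  have hw0 : ∀ p, 0 ≤ w p := fun p => Real.rpow_nonneg (norm_nonneg _) _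
  have hK0 : ∀ y : En n, y ≠ 0 → 0 ≤ K y := fun y hy =>
    le_trans (by positivity) (hKbd y hy).1
  set g : En n × En n → ℝ := fun p => (u p.1 - u p.2) * (v p.1 - v p.2) * K (p.1 - p.2)
    with hg_def
  have hg0 : ∀ p, 0 ≤ g p := by
    intro p
    rcases eq_or_ne p.1 p.2 with he | he
    · simp [hg_def, he]
    · have hne : p.1 - p.2 ≠ 0 := sub_ne_zero.mpr he
      have h1 : 0 ≤ (u p.1 - u p.2) * (v p.1 - v p.2) :=
        le_trans (sq_nonneg _) (min_sq_le _ _ _)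
      exact mul_nonneg h1 (hK0 _ hne)
  have hgle : ∀ p, g p ≤ (u p.1 - u p.2)^2 * (Lam * c * w p) := by
    intro p
    rcases eq_or_ne p.1 p.2 with he | he
    · simp only [hg_def, he, sub_self, zero_mul, mul_zero]
      positivity
    · have hne : p.1 - p.2 ≠ 0 := sub_ne_zero.mpr he
      calc g p ≤ (u p.1 - u p.2)^2 * K (p.1 - p.2) :=
            mul_le_mul_of_nonneg_right (min_mul_le _ _ _) (hK0 _ hne)
        _ ≤ (u p.1 - u p.2)^2 * (Lam * c * w p) :=
            mul_le_mul_of_nonneg_left (hKbd _ hne).2 (sq_nonneg _)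
  have hglow : ∀ p, lam * c * ((v p.1 - v p.2)^2 * w p) ≤ g p := by
    intro p
    rcases eq_or_ne p.1 p.2 with he | he
    · simp [hg_def, he]
    · have hne : p.1 - p.2 ≠ 0 := sub_ne_zero.mpr he
      have hrw : lam * c * ((v p.1 - v p.2)^2 * w p) = (v p.1 - v p.2)^2 * (lam * c * w p) := by
        ring
      rw [hrw]
      exact mul_le_mul (min_sq_le _ _ _) (hKbd _ hne).1 (by positivity)
        (le_trans (sq_nonneg _) (min_sq_le _ _ _))
  have hum : Measurable u := hu.1.1
  have hvm : Measurable v := hum.min measurable_const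
  have hsub : Measurable (fun p : En n × En n => p.1 - p.2) :=
    measurable_fst.sub measurable_snd
  have hgm : Measurable g :=
    (((hum.comp measurable_fst).sub (hum.comp measurable_snd)).mul
      ((hvm.comp measurable_fst).sub (hvm.comp measurable_snd))).mul (hKm.comp hsub)
  have hGfin : (∫⁻ p : En n × En n, ENNReal.ofReal ((u p.1 - u p.2)^2 * (Lam * c * w p))) < ⊤ := by
    have heq : ∀ p : En n × En n, ENNReal.ofReal ((u p.1 - u p.2)^2 * (Lam * c * w p)) =
        ENNReal.ofReal (Lam * c) * ENNReal.ofReal ((u p.1 - u p.2)^2 * w p) := by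
      intro p
      rw [← ENNReal.ofReal_mul hLc]
      ring_nf
    simp_rw [heq]
    rw [lintegral_const_mul]
    · have : (∫⁻ p : En n × En n, ENNReal.ofReal ((u p.1 - u p.2)^2 * w p)) =
        gagliardoSq n s u := by simp only [gagliardoSq, hw_def]
      rw [this]
      exact ENNReal.mul_lt_top ENNReal.ofReal_lt_top hu.1.2.2
    · exact ((((hum.comp measurable_fst).sub (hum.comp measurable_snd)).pow_const 2).mul
        ((measurable_rpow_fun _).comp hsub.norm)).ennreal_ofReal
  have hgfin : (∫⁻ p, ENNReal.ofReal (g p)) < ⊤ :=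
    lt_of_le_of_lt (lintegral_mono fun p => ENNReal.ofReal_le_ofReal (hgle p)) hGfin
  have hgint : Integrable g := by
    refine ⟨hgm.aestronglyMeasurable, ?_⟩
    rw [hasFiniteIntegral_iff_ofReal (Eventually.of_forall hg0)]
    exact hgfin
  have hofg : ENNReal.ofReal (∫ p, g p) = ∫⁻ p, ENNReal.ofReal (g p) :=
    ofReal_integral_eq_lintegral_ofReal hgint (Eventually.of_forall hg0)
  have hgagv : gagliardoSq n s v = ∫⁻ p : En n × En n,
      ENNReal.ofReal ((v p.1 - v p.2)^2 * w p) := by simp only [gagliardoSq, hw_def]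
  have hlow : ENNReal.ofReal (lam * c) * gagliardoSq n s v ≤ ∫⁻ p, ENNReal.ofReal (g p) := by
    have hptwise : ∀ p : En n × En n, ENNReal.ofReal (lam * c) *
        ENNReal.ofReal ((v p.1 - v p.2)^2 * w p) ≤ ENNReal.ofReal (g p) := fun p => by
      rw [← ENNReal.ofReal_mul hlc.le]
      exact ENNReal.ofReal_le_ofReal (hglow p)
    have hmv : Measurable fun p : En n × En n =>
        ENNReal.ofReal ((v p.1 - v p.2)^2 * w p) :=
      ((((hvm.comp measurable_fst).sub (hvm.comp measurable_snd)).pow_const 2).mul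
        ((measurable_rpow_fun _).comp hsub.norm)).ennreal_ofReal
    calc ENNReal.ofReal (lam * c) * gagliardoSq n s v
        = ∫⁻ p : En n × En n, ENNReal.ofReal (lam * c) *
            ENNReal.ofReal ((v p.1 - v p.2)^2 * w p) := by
          rw [hgagv, lintegral_const_mul _ hmv]
      _ ≤ ∫⁻ p, ENNReal.ofReal (g p) := lintegral_mono hptwise
  have hvY : v ∈ Ys0 n s Ω V := min_mem_Ys0 n s Ω V hVpos u hu τ hτ
  have heq := hweak v hvY
  haveI hfinΩ : IsFiniteMeasure (volume.restrict Ω) := by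
    constructor
    rw [Measure.restrict_apply_univ]
    exact lt_of_le_of_lt (measure_mono subset_closure) hΩb.isCompact_closure.measure_lt_top
  have hint : Integrable h (volume.restrict Ω) :=
    memLp_one_iff_integrable.mp (hh2.mono_exponent (by norm_num))
  have hv_le : ∀ x, v x ≤ τ := fun x => min_le_right _ _
  have hv0ae : ∀ᵐ x ∂volume, 0 ≤ v x := hu0.mono fun x hx => le_min hx hτ.le
  have hA : 0 ≤ ∫ x in Ω, V x * u x * v x := by
    apply integral_nonneg_of_ae
    filter_upwards [ae_restrict_of_ae hu0] with x hx
    exact mul_nonneg (mul_nonneg (hVpos x) hx) (le_min hx hτ.le)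
  have hintv : Integrable (fun x => h x * v x) (volume.restrict Ω) := by
    refine Integrable.mono' (hint.abs.const_mul τ)
      (hh2.aestronglyMeasurable.mul hvm.aestronglyMeasurable) ?_
    filter_upwards [ae_restrict_of_ae hv0ae] with x hx
    rw [norm_mul]
    calc ‖h x‖ * ‖v x‖ ≤ ‖h x‖ * τ := by
          refine mul_le_mul_of_nonneg_left ?_ (norm_nonneg _)
          rw [Real.norm_eq_abs, abs_of_nonneg hx]; exact hv_le x
      _ = τ * |h x| := by rw [Real.norm_eq_abs]; ring
  have hB : (∫ x in Ω, h x * v x) ≤ τ := by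
    have h1 : (∫ x in Ω, h x * v x) ≤ ∫ x in Ω, τ * h x := by
      refine integral_mono_ae hintv (hint.const_mul τ) ?_
      filter_upwards [hh0, ae_restrict_of_ae hv0ae] with x hx hvx
      calc h x * v x ≤ h x * τ := mul_le_mul_of_nonneg_left (hv_le x) hx
        _ = τ * h x := by ring
    rw [integral_const_mul] at h1
    calc (∫ x in Ω, h x * v x) ≤ τ * ∫ x in Ω, h x := h1
      _ ≤ τ * 1 := mul_le_mul_of_nonneg_left hh1 hτ.le
      _ = τ := mul_one τ
  have hb : bilin n K u v ≤ τ := by linarith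
  have hgsum : (∫ p, g p) = 2 * bilin n K u v := by
    have hid : (∫ p, g p) =
        ∫ p : En n × En n, (u p.1 - u p.2) * (v p.1 - v p.2) * K (p.1 - p.2) := rfl
    rw [hid, bilin]; ring
  have hmain : ENNReal.ofReal (lam*c) * gagliardoSq n s v ≤ ENNReal.ofReal (2*τ) := by
    refine le_trans hlow ?_
    rw [← hofg]
    exact ENNReal.ofReal_le_ofReal (by rw [hgsum]; linarith)
  have h2τ : ENNReal.ofReal (2*τ/(lam*c)) = ENNReal.ofReal (2*τ) / ENNReal.ofReal (lam*c) :=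
    ENNReal.ofReal_div_of_pos hlc
  rw [h2τ, ENNReal.le_div_iff_mul_le
    (Or.inl (ne_of_gt (ENNReal.ofReal_pos.mpr hlc))) (Or.inl ENNReal.ofReal_ne_top)]
  rw [mul_comm]
  exact hmain


lemma recursion_est (n : ℕ) (hn : 2 ≤ n) (s : ℝ) (hs0 : 0 < s)
    (u : En n → ℝ) (hum : Measurable u) (τ E : ℝ) (hτ : 0 < τ) (hE : 0 ≤ E)
    (hgag : gagliardoSq n s (fun x => min (u x) τ) ≤ ENNReal.ofReal E)
    (hfin : volume {x | τ/2 < u x} < ⊤) :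
    (volume {x | τ < u x}).toReal ≤
      (4 * E / τ^2) * (2 / (volume (Metric.ball (0:En n) 1)).toReal) ^ (((n:ℝ)+2*s)/n) *
        ((volume {x | τ/2 < u x}).toReal) ^ (2*s/(n:ℝ)) := by
  have hn0 : (n:ℝ) ≠ 0 := by positivity
  set α : ℝ := (n:ℝ) + 2*s with hα_def
  have hαpos : 0 < α := by positivity
  set ω : ℝ≥0∞ := volume (Metric.ball (0:En n) 1) with hω_def
  have hωpos : 0 < ω := Metric.measure_ball_pos volume 0 one_pos
  have hωfin : ω < ⊤ := measure_ball_lt_top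
  set ωr : ℝ := ω.toReal with hωr_def
  have hωrpos : 0 < ωr := ENNReal.toReal_pos hωpos.ne' hωfin.ne
  set D : Set (En n) := {y | u y ≤ τ/2} with hD_def
  set A : Set (En n) := {x | τ < u x} with hA_def
  have hDm : MeasurableSet D := measurableSet_le hum measurable_const
  have hAm : MeasurableSet A := measurableSet_lt measurable_const hum
  have hAsub : A ⊆ {x | τ/2 < u x} := by
    intro x hx
    simp only [hA_def, Set.mem_setOf_eq] at hx ⊢
    linarith
  have hvolA_fin : volume A < ⊤ := lt_of_le_of_lt (measure_mono hAsub) hfin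
  set a' : ℝ≥0∞ := volume {x | τ/2 < u x} with ha'_def
  set ar : ℝ := a'.toReal with har_def
  have har0 : 0 ≤ ar := ENNReal.toReal_nonneg
  rcases eq_or_lt_of_le har0 with hz | harpos
  · have ha'0 : a' = 0 := by
      rcases (ENNReal.toReal_eq_zero_iff a').mp hz.symm with h0 | h0
      · exact h0
      · exact absurd h0 hfin.ne
    have hvA : volume A = 0 := le_antisymm (ha'0 ▸ measure_mono hAsub) zero_le
    rw [hvA]
    simp only [ENNReal.toReal_zero]
    rw [← hz, Real.zero_rpow (by positivity : 2*s/(n:ℝ) ≠ 0), mul_zero]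
  · have ha'ne : a' ≠ ⊤ := hfin.ne
    haveI : Nontrivial (En n) := ⟨⟨EuclideanSpace.single ⟨0, by omega⟩ (1:ℝ), 0, fun hcon => by
      have h0 := congrArg (fun z : En n => z ⟨0, by omega⟩) hcon
      simp at h0⟩⟩
    set R : ℝ := (2*ar/ωr) ^ ((n:ℝ))⁻¹ with hR_def
    have hXpos : 0 < 2*ar/ωr := by positivity
    have hR : 0 < R := Real.rpow_pos_of_pos hXpos _
    have hRα : 0 < R ^ α := Real.rpow_pos_of_pos hR _
    have hball : ∀ x : En n, volume (Metric.ball x R) = 2 * a' := by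
      intro x
      rw [Measure.addHaar_ball volume x hR.le]
      have hfr : Module.finrank ℝ (En n) = n := finrank_euclideanSpace_fin
      rw [hfr, hR_def, Real.rpow_inv_natCast_pow hXpos.le (by omega)]
      rw [ENNReal.ofReal_div_of_pos hωrpos, hωr_def, ENNReal.ofReal_toReal hωfin.ne,
        ENNReal.div_mul_cancel hωpos.ne' hωfin.ne,
        ENNReal.ofReal_mul (by norm_num : (0:ℝ) ≤ 2), ENNReal.ofReal_ofNat,
        har_def, ENNReal.ofReal_toReal ha'ne]
    have hDball : ∀ x : En n, a' ≤ volume (D ∩ Metric.ball x R) := by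
      intro x
      have hsub2 : Metric.ball x R ⊆ (D ∩ Metric.ball x R) ∪ {y | τ/2 < u y} := by
        intro y hy
        rcases le_or_gt (u y) (τ/2) with h1 | h1
        · exact Or.inl ⟨h1, hy⟩
        · exact Or.inr h1
      have h1 : volume (Metric.ball x R) ≤ volume (D ∩ Metric.ball x R) + a' :=
        le_trans (measure_mono hsub2) (measure_union_le _ _)
      rw [hball x, two_mul] at h1
      exact (ENNReal.add_le_add_iff_right ha'ne).mp h1
    set v : En n → ℝ := fun x => min (u x) τ with hv_def
    set f : En n × En n → ℝ≥0∞ :=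
      fun p => ENNReal.ofReal ((τ/2)^2 * ‖p.1 - p.2‖ ^ (-α)) with hf_def
    have hfm : Measurable f := by
      apply Measurable.ennreal_ofReal
      exact measurable_const.mul
        ((measurable_rpow_fun _).comp (measurable_fst.sub measurable_snd).norm)
    have step1 : (∫⁻ p in A ×ˢ D, f p) ≤ gagliardoSq n s v := by
      have hgv : gagliardoSq n s v = ∫⁻ p : En n × En n,
          ENNReal.ofReal ((v p.1 - v p.2) ^ 2 * ‖p.1 - p.2‖ ^ (-α)) := by
        simp only [gagliardoSq, hα_def]
      rw [hgv]
      have hmid : (∫⁻ p in A ×ˢ D, f p) ≤ ∫⁻ p in A ×ˢ D,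
          ENNReal.ofReal ((v p.1 - v p.2) ^ 2 * ‖p.1 - p.2‖ ^ (-α)) := by
        refine setLIntegral_mono' (hAm.prod hDm) ?_
        rintro ⟨x, y⟩ ⟨hx, hy⟩
        refine ENNReal.ofReal_le_ofReal ?_
        have hvx : v x = τ := min_eq_right (le_of_lt hx)
        have hvy : v y ≤ τ/2 := le_trans (min_le_left _ _) hy
        have hle : τ/2 ≤ v x - v y := by rw [hvx]; linarith
        refine mul_le_mul_of_nonneg_right ?_ (Real.rpow_nonneg (norm_nonneg _) _)
        nlinarith
      exact le_trans hmid (lintegral_mono' Measure.restrict_le_self le_rfl)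
    have step2 : ENNReal.ofReal ((τ/2)^2 * R ^ (-α)) * a' * volume A ≤
        ∫⁻ p in A ×ˢ D, f p := by
      rw [MeasureTheory.Measure.volume_eq_prod, ← Measure.prod_restrict,
        lintegral_prod _ hfm.aemeasurable]
      have inner : ∀ x : En n, ENNReal.ofReal ((τ/2)^2 * R ^ (-α)) * a' ≤
          ∫⁻ y in D, f (x, y) := by
        intro x
        refine le_trans ?_ (lintegral_mono_set Set.inter_subset_left :
          (∫⁻ y in D ∩ Metric.ball x R, f (x, y)) ≤ _)
        have hpt : ∀ᵐ y ∂(volume.restrict (D ∩ Metric.ball x R)),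
            ENNReal.ofReal ((τ/2)^2 * R ^ (-α)) ≤ f (x, y) := by
          rw [ae_restrict_iff' (hDm.inter measurableSet_ball)]
          have hne_ae : ∀ᵐ y : En n ∂volume, y ≠ x := by
            rw [ae_iff]
            simpa using measure_singleton x
          filter_upwards [hne_ae] with y hy hymem
          refine ENNReal.ofReal_le_ofReal ?_
          refine mul_le_mul_of_nonneg_left ?_ (by positivity)
          have hd : 0 < ‖x - y‖ := norm_pos_iff.mpr (sub_ne_zero_of_ne (Ne.symm hy))
          have hdR : ‖x - y‖ ≤ R := by
            rw [← dist_eq_norm, dist_comm]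
            exact (Metric.mem_ball.mp hymem.2).le
          rw [Real.rpow_neg hR.le, Real.rpow_neg (norm_nonneg _)]
          exact inv_anti₀ (Real.rpow_pos_of_pos hd _)
            (Real.rpow_le_rpow hd.le hdR hαpos.le)
        calc ENNReal.ofReal ((τ/2)^2 * R ^ (-α)) * a'
            ≤ ENNReal.ofReal ((τ/2)^2 * R ^ (-α)) * volume (D ∩ Metric.ball x R) :=
              mul_le_mul_right (hDball x) _
          _ = ∫⁻ _ in D ∩ Metric.ball x R, ENNReal.ofReal ((τ/2)^2 * R ^ (-α)) :=
              (setLIntegral_const _ _).symm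
          _ ≤ ∫⁻ y in D ∩ Metric.ball x R, f (x, y) := lintegral_mono_ae hpt
      calc ENNReal.ofReal ((τ/2)^2 * R ^ (-α)) * a' * volume A
          = ∫⁻ _ in A, ENNReal.ofReal ((τ/2)^2 * R ^ (-α)) * a' := by
            rw [setLIntegral_const]
        _ ≤ ∫⁻ x in A, ∫⁻ y in D, f (x, y) := lintegral_mono fun x => inner x
    have hchain : ENNReal.ofReal ((τ/2)^2 * R ^ (-α)) * a' * volume A ≤
        ENNReal.ofReal E := le_trans step2 (le_trans step1 hgag)
    have hreal : ((τ/2)^2 * R ^ (-α)) * ar * (volume A).toReal ≤ E := by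
      have h1 := ENNReal.toReal_mono ENNReal.ofReal_ne_top hchain
      rw [ENNReal.toReal_ofReal hE] at h1
      rw [ENNReal.toReal_mul, ENNReal.toReal_mul,
        ENNReal.toReal_ofReal (by positivity)] at h1
      exact h1
    -- algebra
    have hRαneg : R ^ (-α) = (R ^ α)⁻¹ := Real.rpow_neg hR.le α
    have hvAr : 0 ≤ (volume A).toReal := ENNReal.toReal_nonneg
    have H3 : (τ/2)^2 * ar * (volume A).toReal ≤ E * R ^ α := by
      have h2 := mul_le_mul_of_nonneg_right hreal hRα.le
      rw [hRαneg] at h2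
      calc (τ/2)^2 * ar * (volume A).toReal
          = (τ/2)^2 * (R ^ α)⁻¹ * ar * (volume A).toReal * R ^ α := by
            field_simp
        _ ≤ E * R ^ α := h2
    have hRαval : R ^ α = (2/ωr) ^ (α/(n:ℝ)) * ar ^ (α/(n:ℝ)) := by
      rw [hR_def, ← Real.rpow_mul hXpos.le,
        show ((n:ℝ))⁻¹ * α = α/(n:ℝ) by ring,
        show 2*ar/ωr = (2/ωr) * ar by ring,
        Real.mul_rpow (by positivity) har0]
    have hdiv : (volume A).toReal ≤ 4*E*R^α/(τ^2*ar) := by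
      rw [le_div_iff₀ (by positivity)]
      nlinarith [H3]
    refine le_trans hdiv (le_of_eq ?_)
    rw [hRαval]
    have he : α/(n:ℝ) = 2*s/(n:ℝ) + 1 := by
      rw [hα_def]
      field_simp
      ring
    have har1 : ar ^ (α/(n:ℝ)) = ar ^ (2*s/(n:ℝ)) * ar := by
      rw [he, Real.rpow_add harpos, Real.rpow_one]
    rw [har1]
    field_simp


lemma iterate_bound (θ Q : ℝ) (hθ0 : 0 < θ) (hθ1 : θ < 1) (hQ : 1 ≤ Q) :
    ∃ C₁ : ℝ, 0 < C₁ ∧ ∀ (f : ℝ → ℝ) (M : ℝ), 1 ≤ M →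
      (∀ t, 0 < t → 0 ≤ f t ∧ f t ≤ M) →
      (∀ t, 0 < t → f t ≤ Q * t⁻¹ * (f (t/2)) ^ θ) →
      ∀ t, 0 < t → f t ≤ C₁ * t ^ (-(1-θ)⁻¹) := by
  have hQ0 : (0:ℝ) < Q := lt_of_lt_of_le one_pos hQ
  have h1θ : (0:ℝ) < 1 - θ := by linarith
  set β : ℝ := (1-θ)⁻¹ with hβ_def
  have hβpos : 0 < β := by positivity
  set Dsum : ℝ := θ/(1-θ)^2 with hD_def
  have hDpos : 0 ≤ Dsum := by positivity
  refine ⟨Q ^ β * 2 ^ Dsum, by positivity, ?_⟩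
  intro f M hM hbound hrec t ht
  have hfnn : ∀ t, 0 < t → 0 ≤ f t := fun t ht => (hbound t ht).1
  set A : ℕ → ℝ := fun k => ∑ i ∈ Finset.range k, θ^i with hA_def
  set Dk : ℕ → ℝ := fun k => ∑ i ∈ Finset.range k, (i:ℝ)*θ^i with hDk_def
  -- the iterated inequality
  have claim : ∀ k : ℕ, ∀ t : ℝ, 0 < t →
      f t ≤ Q ^ (A k) * 2 ^ (Dk k) * t ^ (-(A k)) * (f (t/2^k)) ^ ((θ:ℝ)^k) := by
    intro k
    induction k with
    | zero =>
      intro t ht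
      simp [hA_def, hDk_def, Real.rpow_natCast]
    | succ k ih =>
      intro t ht
      have h2k : (0:ℝ) < 2^k := by positivity
      have htk : 0 < t/2^k := by positivity
      have htk1 : 0 < t/2^(k+1) := by positivity
      have hsplit : t/2^k/2 = t/2^(k+1) := by
        rw [div_div, ← pow_succ]
      have hrec' : f (t/2^k) ≤ Q * (t/2^k)⁻¹ * (f (t/2^(k+1)))^θ := by
        have := hrec (t/2^k) htk
        rwa [hsplit] at this
      have ha : (0:ℝ) ≤ θ^k := by positivity
      have hw : (0:ℝ) ≤ (f (t/2^(k+1)))^θ := Real.rpow_nonneg (hfnn _ htk1) θ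
      have hstep : (f (t/2^k)) ^ ((θ:ℝ)^k) ≤
          (Q * (t/2^k)⁻¹ * (f (t/2^(k+1)))^θ) ^ ((θ:ℝ)^k) :=
        Real.rpow_le_rpow (hfnn _ htk) hrec' ha
      have hexpand : (Q * (t/2^k)⁻¹ * (f (t/2^(k+1)))^θ) ^ ((θ:ℝ)^k) =
          Q ^ ((θ:ℝ)^k) * (2 ^ ((k:ℝ)*θ^k) * t ^ (-(θ:ℝ)^k)) *
            (f (t/2^(k+1))) ^ ((θ:ℝ)^(k+1)) := by
        rw [Real.mul_rpow (by positivity) hw, Real.mul_rpow hQ0.le (by positivity)]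
        congr 1
        · congr 1
          have h1 : (t/2^k)⁻¹ = (2:ℝ)^k * t⁻¹ := by field_simp
          rw [h1, Real.mul_rpow (by positivity) (by positivity)]
          congr 1
          · rw [← Real.rpow_natCast (2:ℝ) k, ← Real.rpow_mul (by norm_num : (0:ℝ) ≤ 2)]
          · rw [Real.inv_rpow ht.le, ← Real.rpow_neg ht.le]
        · rw [← Real.rpow_mul (hfnn _ htk1)]
          congr 1
          rw [pow_succ]
          ring
      have hk := ih t ht
      have hmono : Q ^ (A k) * 2 ^ (Dk k) * t ^ (-(A k)) * (f (t/2^k)) ^ ((θ:ℝ)^k) ≤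
          Q ^ (A k) * 2 ^ (Dk k) * t ^ (-(A k)) *
            (Q ^ ((θ:ℝ)^k) * (2 ^ ((k:ℝ)*θ^k) * t ^ (-(θ:ℝ)^k)) *
              (f (t/2^(k+1))) ^ ((θ:ℝ)^(k+1))) := by
        rw [← hexpand]
        exact mul_le_mul_of_nonneg_left hstep (by positivity)
      refine le_trans hk (le_trans hmono (le_of_eq ?_))
      have hAsucc : A (k+1) = A k + θ^k := Finset.sum_range_succ _ _
      have hDsucc : Dk (k+1) = Dk k + (k:ℝ)*θ^k := Finset.sum_range_succ _ _
      rw [hAsucc, hDsucc, Real.rpow_add hQ0, Real.rpow_add (by norm_num : (0:ℝ) < 2),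
        neg_add, Real.rpow_add ht]
      ring
  -- pass to the limit
  have hsummA : Summable (fun i : ℕ => θ^i) := summable_geometric_of_lt_one hθ0.le hθ1
  have htsumA : ∑' i : ℕ, θ^i = (1-θ)⁻¹ := tsum_geometric_of_lt_one hθ0.le hθ1
  have hhsD : HasSum (fun i : ℕ => (i:ℝ)*θ^i) (θ/(1-θ)^2) := by
    have := hasSum_coe_mul_geometric_of_norm_lt_one
      (show ‖θ‖ < 1 by rw [Real.norm_eq_abs, abs_of_pos hθ0]; exact hθ1)
    exact this
  have hAle : ∀ k, A k ≤ β := by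
    intro k
    rw [hβ_def, ← htsumA]
    exact Summable.sum_le_tsum _ (fun i _ => by positivity) hsummA
  have hDle : ∀ k, Dk k ≤ Dsum := by
    intro k
    rw [hD_def, ← hhsD.tsum_eq]
    exact Summable.sum_le_tsum _ (fun i _ => by positivity) hhsD.summable
  have hAval : ∀ k, β - A k = θ^k * β := by
    intro k
    have hAk : A k = (θ^k - 1)/(θ - 1) := by
      rw [hA_def]
      exact geom_sum_eq (ne_of_lt hθ1) k
    rw [hAk, hβ_def]
    have hne1 : θ - 1 ≠ 0 := sub_ne_zero.mpr (ne_of_lt hθ1)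
    have hne2 : (1:ℝ) - θ ≠ 0 := h1θ.ne'
    field_simp
    ring
  set X : ℝ := t ^ β * M with hX_def
  have hXpos : 0 < X := by
    have : (0:ℝ) < t ^ β := Real.rpow_pos_of_pos ht β
    nlinarith
  have hbd : ∀ k : ℕ, f t ≤ (Q ^ β * 2 ^ Dsum) * t ^ (-β) * X ^ ((θ:ℝ)^k) := by
    intro k
    have hk := claim k t ht
    have h2k : (0:ℝ) < 2^k := by positivity
    have htk : 0 < t/2^k := by positivity
    have hfM : (f (t/2^k)) ^ ((θ:ℝ)^k) ≤ M ^ ((θ:ℝ)^k) :=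
      Real.rpow_le_rpow (hfnn _ htk) (hbound _ htk).2 (by positivity)
    have hQle : Q ^ (A k) ≤ Q ^ β := Real.rpow_le_rpow_of_exponent_le hQ (hAle k)
    have h2le : (2:ℝ) ^ (Dk k) ≤ 2 ^ Dsum :=
      Real.rpow_le_rpow_of_exponent_le (by norm_num) (hDle k)
    have htval : t ^ (-(A k)) = t ^ (-β) * (t ^ β) ^ ((θ:ℝ)^k) := by
      rw [← Real.rpow_natCast θ k, ← Real.rpow_mul ht.le, ← Real.rpow_add ht]
      congr 1
      have := hAval k
      rw [← Real.rpow_natCast θ k] at this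
      linarith
    calc f t ≤ Q ^ (A k) * 2 ^ (Dk k) * t ^ (-(A k)) * (f (t/2^k)) ^ ((θ:ℝ)^k) := hk
      _ ≤ Q ^ β * 2 ^ Dsum * t ^ (-(A k)) * M ^ ((θ:ℝ)^k) := by
          have h0 : (0:ℝ) ≤ t ^ (-(A k)) := Real.rpow_nonneg ht.le _
          have h0' : (0:ℝ) ≤ (f (t/2^k)) ^ ((θ:ℝ)^k) := Real.rpow_nonneg (hfnn _ htk) _
          have e1 : Q ^ (A k) * 2 ^ (Dk k) ≤ Q ^ β * 2 ^ Dsum :=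
            mul_le_mul hQle h2le (by positivity) (by positivity)
          have e2 : Q ^ (A k) * 2 ^ (Dk k) * t ^ (-(A k)) ≤
              Q ^ β * 2 ^ Dsum * t ^ (-(A k)) := mul_le_mul_of_nonneg_right e1 h0
          exact mul_le_mul e2 hfM h0' (by positivity)
      _ = (Q ^ β * 2 ^ Dsum) * t ^ (-β) * X ^ ((θ:ℝ)^k) := by
          rw [htval, hX_def, Real.mul_rpow (Real.rpow_nonneg ht.le _) (by positivity)]
          ring
  have hθk : Tendsto (fun k : ℕ => (θ:ℝ)^k) atTop (nhds 0) :=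
    tendsto_pow_atTop_nhds_zero_of_lt_one hθ0.le hθ1
  have hcont : ContinuousAt (fun e : ℝ => X ^ e) 0 :=
    Real.continuousAt_const_rpow hXpos.ne'
  have hXk : Tendsto (fun k : ℕ => X ^ ((θ:ℝ)^k)) atTop (nhds 1) := by
    have := hcont.tendsto.comp hθk
    simpa [Function.comp_def, Real.rpow_zero] using this
  have hlim : Tendsto (fun k : ℕ => (Q ^ β * 2 ^ Dsum) * t ^ (-β) * X ^ ((θ:ℝ)^k))
      atTop (nhds ((Q ^ β * 2 ^ Dsum) * t ^ (-β) * 1)) :=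
    (tendsto_const_nhds.mul hXk)
  have := ge_of_tendsto' hlim hbd
  rw [mul_one] at this
  calc f t ≤ Q ^ β * 2 ^ Dsum * t ^ (-β) := this
    _ = Q ^ β * 2 ^ Dsum * t ^ (-(1-θ)⁻¹) := by rw [hβ_def]

set_option maxHeartbeats 1000000 in
/-- uniform local `L^p` estimate, `p ∈ [1, n/(n-2s))`, for nonnegative
weak solutions `u ∈ Y^s_0(Ω)` of `L_K u + V u = h` with `h ≥ 0`, `∫_Ω h ≤ 1`:
`‖u‖_{L^p(B_r(x₀))} ≤ C r^{n/p - (n-2s)}` with `C = C(p, λ, n, s)`. -/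
theorem stmt18 (n : ℕ) (hn : 2 ≤ n) (s : ℝ) (hs0 : 0 < s) (hs1 : s < 1)
    (c : ℝ) (hc : 0 < c)
    (hc1 : c * ∫ ξ : En n, (1 - Real.cos (ξ ⟨0, by omega⟩)) * ‖ξ‖ ^ (-((n : ℝ) + 2 * s)) = 1)
    (lam : ℝ) (hlam : 0 < lam) :
    ∀ p : ℝ, 1 ≤ p → p < (n : ℝ) / (n - 2 * s) →
      ∃ C : ℝ, 0 < C ∧
        ∀ Lam : ℝ, lam ≤ Lam → ∀ K : En n → ℝ, IsKernel n s lam Lam c K →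
        ∀ q : ℝ, (n : ℝ) / (2 * s) < q →
        ∀ V : En n → ℝ, Measurable V → (∀ x, 0 ≤ V x) → LocLq n q V →
        ∀ Ω : Set (En n), IsOpen Ω → Bornology.IsBounded Ω →
        ∀ h : En n → ℝ, MemLp h 2 (volume.restrict Ω) →
          (∀ᵐ x ∂volume.restrict Ω, 0 ≤ h x) → (∫ x in Ω, h x) ≤ 1 →
        ∀ u ∈ Ys0 n s Ω V, (∀ᵐ x : En n ∂volume, 0 ≤ u x) →
          (∀ φ ∈ Ys0 n s Ω V,
            bilin n K u φ + ∫ x in Ω, V x * u x * φ x = ∫ x in Ω, h x * φ x) →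
        ∀ (x₀ : En n) (r : ℝ), 0 < r →
          eLpNorm u (ENNReal.ofReal p) (volume.restrict (Metric.ball x₀ r)) ≤
            ENNReal.ofReal (C * r ^ ((n : ℝ) / p - ((n : ℝ) - 2 * s))) := by
  intro p hp1 hpβ
  have hp0 : (0:ℝ) < p := lt_of_lt_of_le one_pos hp1
  have hs2n : 2*s < (n:ℝ) := by
    have : (2:ℝ) ≤ n := by exact_mod_cast hn
    linarith
  have hn2s : (0:ℝ) < (n:ℝ) - 2*s := by linarith
  have hnpos : (0:ℝ) < n := by positivity
  haveI : Nontrivial (En n) := ⟨⟨EuclideanSpace.single ⟨0, by omega⟩ (1:ℝ), 0, fun hcon => by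
    have h0 := congrArg (fun z : En n => z ⟨0, by omega⟩) hcon
    simp at h0⟩⟩
  set θ : ℝ := 2*s/(n:ℝ) with hθ_def
  have hθ0 : 0 < θ := by positivity
  have hθ1 : θ < 1 := by rw [hθ_def, div_lt_one hnpos]; linarith
  set β : ℝ := (1-θ)⁻¹ with hβ_def
  have hβval : β = (n:ℝ)/((n:ℝ)-2*s) := by
    rw [hβ_def, hθ_def]
    rw [show 1 - 2*s/(n:ℝ) = ((n:ℝ)-2*s)/(n:ℝ) by field_simp]
    rw [inv_div]
  have hpβ' : p < β := by rw [hβval]; exact hpβ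
  set ωr : ℝ := (volume (Metric.ball (0:En n) 1)).toReal with hωr_def
  have hωrpos : 0 < ωr :=
    ENNReal.toReal_pos (Metric.measure_ball_pos volume 0 one_pos).ne' measure_ball_lt_top.ne
  set Q' : ℝ := 8/(lam*c) * (2/ωr) ^ (((n:ℝ)+2*s)/n) with hQ'_def
  set Q : ℝ := max Q' 1 with hQ_def
  obtain ⟨C₁, hC₁pos, hC₁⟩ := iterate_bound θ Q hθ0 hθ1 (le_max_right _ _)
  set G : ℝ := ωr + p*C₁/(β-p) with hG_def
  have hGpos : 0 < G := by
    have h1 : 0 < p*C₁/(β-p) := by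
      have : 0 < β - p := by linarith
      positivity
    positivity
  refine ⟨G ^ (1/p), by positivity, ?_⟩
  intro Lam hLam K hK q hq V hVm hVpos hVloc Ω hΩo hΩb h hh2 hh0 hh1 u hu hu0 hweak x₀ r hr
  have hum : Measurable u := hu.1.1
  have hΩfin : volume Ω < ⊤ :=
    lt_of_le_of_lt (measure_mono subset_closure) hΩb.isCompact_closure.measure_lt_top
  have hsubΩ : ∀ τ : ℝ, 0 < τ → volume {x | τ < u x} ≤ volume Ω := by
    intro τ hτ
    have hbad : volume {x | ¬ (x ∉ Ω → u x = 0)} = 0 := ae_iff.mp hu.1.2.1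
    have hsub : {x | τ < u x} ⊆ Ω ∪ {x | ¬ (x ∉ Ω → u x = 0)} := by
      intro x hx
      by_cases hxΩ : x ∈ Ω
      · exact Or.inl hxΩ
      · refine Or.inr fun himp => ?_
        have h0 := himp hxΩ
        simp only [Set.mem_setOf_eq, h0] at hx
        linarith
    calc volume {x | τ < u x} ≤ volume (Ω ∪ {x | ¬ (x ∉ Ω → u x = 0)}) := measure_mono hsub
      _ ≤ volume Ω + volume {x | ¬ (x ∉ Ω → u x = 0)} := measure_union_le _ _
      _ = volume Ω := by rw [hbad, add_zero]
  have hfin : ∀ τ : ℝ, 0 < τ → volume {x | τ < u x} < ⊤ :=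
    fun τ hτ => lt_of_le_of_lt (hsubΩ τ hτ) hΩfin
  set f : ℝ → ℝ := fun τ => (volume {x | τ < u x}).toReal with hf_def
  have hf0 : ∀ τ, 0 ≤ f τ := fun τ => ENNReal.toReal_nonneg
  set M : ℝ := max (volume Ω).toReal 1 with hM_def
  have hM1 : 1 ≤ M := le_max_right _ _
  have hboundf : ∀ t, 0 < t → 0 ≤ f t ∧ f t ≤ M := by
    intro t ht
    refine ⟨hf0 t, ?_⟩
    calc f t ≤ (volume Ω).toReal := ENNReal.toReal_mono hΩfin.ne (hsubΩ t ht)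
      _ ≤ M := le_max_left _ _
  have hrecf : ∀ t, 0 < t → f t ≤ Q * t⁻¹ * (f (t/2)) ^ θ := by
    intro t ht
    have hgag := energy_est n s lam Lam c hlam hc hLam K hK V hVpos Ω hΩb h hh2 hh0 hh1
      u hu hu0 hweak t ht
    have hrec0 := recursion_est n hn s hs0 u hum t (2*t/(lam*c)) ht (by positivity) hgag
      (hfin (t/2) (by positivity))
    have hQ'e : 4*(2*t/(lam*c))/t^2 * (2/ωr) ^ (((n:ℝ)+2*s)/n) = Q' * t⁻¹ := by
      rw [hQ'_def]
      field_simp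
      ring
    calc f t ≤ 4*(2*t/(lam*c))/t^2 * (2/ωr) ^ (((n:ℝ)+2*s)/n) * (f (t/2)) ^ θ := hrec0
      _ = Q' * t⁻¹ * (f (t/2)) ^ θ := by rw [hQ'e]
      _ ≤ Q * t⁻¹ * (f (t/2)) ^ θ := by
          refine mul_le_mul_of_nonneg_right
            (mul_le_mul_of_nonneg_right (le_max_left _ _) (by positivity))
            (Real.rpow_nonneg (hf0 _) _)
  have hdist : ∀ t, 0 < t → f t ≤ C₁ * t ^ (-β) :=
    fun t ht => hC₁ f M hM1 hboundf hrecf t ht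
  -- layer cake on the ball
  set μB : Measure (En n) := volume.restrict (Metric.ball x₀ r) with hμB_def
  have humB : AEMeasurable u μB := hum.aemeasurable
  have hu0B : 0 ≤ᵐ[μB] u := ae_restrict_of_ae hu0
  have hVb : volume (Metric.ball x₀ r) = ENNReal.ofReal (r ^ ((n:ℝ)) * ωr) := by
    rw [Measure.addHaar_ball volume x₀ hr.le, finrank_euclideanSpace_fin,
      ENNReal.ofReal_mul (by positivity), ← Real.rpow_natCast r n]
    congr 1
    rw [hωr_def, ENNReal.ofReal_toReal measure_ball_lt_top.ne]
  set tstar : ℝ := r ^ (-((n:ℝ)-2*s)) with htstar_def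
  have htstar : 0 < tstar := Real.rpow_pos_of_pos hr _
  have hμBle1 : ∀ t : ℝ, μB {a | t < u a} ≤ ENNReal.ofReal (r ^ ((n:ℝ)) * ωr) := by
    intro t
    rw [hμB_def, Measure.restrict_apply (measurableSet_lt measurable_const hum), ← hVb]
    exact measure_mono Set.inter_subset_right
  have hμBle2 : ∀ t : ℝ, 0 < t → μB {a | t < u a} ≤ ENNReal.ofReal (C₁ * t ^ (-β)) := by
    intro t ht
    rw [hμB_def, Measure.restrict_apply (measurableSet_lt measurable_const hum)]
    calc volume ({a | t < u a} ∩ Metric.ball x₀ r) ≤ volume {a | t < u a} :=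
          measure_mono Set.inter_subset_left
      _ = ENNReal.ofReal (f t) := (ENNReal.ofReal_toReal (hfin t ht).ne).symm
      _ ≤ ENNReal.ofReal (C₁ * t ^ (-β)) := ENNReal.ofReal_le_ofReal (hdist t ht)
  have hβppos : (0:ℝ) < β - p := by linarith
  -- pieces
  have hI1 : (∫⁻ t in Set.Ioc 0 tstar, μB {a | t < u a} * ENNReal.ofReal (t ^ (p-1))) ≤
      ENNReal.ofReal (r ^ ((n:ℝ)) * ωr) * ENNReal.ofReal (tstar ^ p / p) := by
    have hmono : (∫⁻ t in Set.Ioc 0 tstar, μB {a | t < u a} * ENNReal.ofReal (t ^ (p-1))) ≤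
        ∫⁻ t in Set.Ioc 0 tstar, ENNReal.ofReal (r ^ ((n:ℝ)) * ωr) * ENNReal.ofReal (t ^ (p-1)) :=
      lintegral_mono fun t => mul_le_mul_left (hμBle1 t) _
    refine le_trans hmono ?_
    rw [lintegral_const_mul _ (measurable_rpow_fun _).ennreal_ofReal]
    refine mul_le_mul_right (le_of_eq ?_) _
    have hnn : 0 ≤ᵐ[volume.restrict (Set.Ioc 0 tstar)] fun t : ℝ => t ^ (p-1) := by
      filter_upwards [ae_restrict_mem measurableSet_Ioc] with t ht
      exact Real.rpow_nonneg ht.1.le _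
    have hintg : IntegrableOn (fun t : ℝ => t ^ (p-1)) (Set.Ioc 0 tstar) := by
      have h1 : IntervalIntegrable (fun t : ℝ => t ^ (p-1)) volume 0 tstar :=
        intervalIntegral.intervalIntegrable_rpow' (by linarith)
      rwa [intervalIntegrable_iff, Set.uIoc_of_le htstar.le] at h1
    rw [← ofReal_integral_eq_lintegral_ofReal hintg hnn]
    congr 1
    rw [← intervalIntegral.integral_of_le htstar.le,
      integral_rpow (Or.inl (by linarith : (-1:ℝ) < p-1))]
    rw [sub_add_cancel, Real.zero_rpow hp0.ne']
    ring
  have hI2 : (∫⁻ t in Set.Ioi tstar, μB {a | t < u a} * ENNReal.ofReal (t ^ (p-1))) ≤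
      ENNReal.ofReal C₁ * ENNReal.ofReal (tstar ^ (p-β) / (β-p)) := by
    have hmono : (∫⁻ t in Set.Ioi tstar, μB {a | t < u a} * ENNReal.ofReal (t ^ (p-1))) ≤
        ∫⁻ t in Set.Ioi tstar, ENNReal.ofReal C₁ * ENNReal.ofReal (t ^ (p-1-β)) := by
      refine lintegral_mono_ae ?_
      rw [ae_restrict_iff' measurableSet_Ioi]
      refine Eventually.of_forall fun t ht => ?_
      have ht0 : 0 < t := lt_trans htstar ht
      calc μB {a | t < u a} * ENNReal.ofReal (t ^ (p-1))
          ≤ ENNReal.ofReal (C₁ * t ^ (-β)) * ENNReal.ofReal (t ^ (p-1)) :=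
            mul_le_mul_left (hμBle2 t ht0) _
        _ = ENNReal.ofReal C₁ * ENNReal.ofReal (t ^ (p-1-β)) := by
            rw [← ENNReal.ofReal_mul (by positivity), ← ENNReal.ofReal_mul hC₁pos.le]
            congr 1
            rw [mul_assoc, ← Real.rpow_add ht0]
            congr 1
            ring
    refine le_trans hmono ?_
    rw [lintegral_const_mul _ (measurable_rpow_fun _).ennreal_ofReal]
    refine mul_le_mul_right (le_of_eq ?_) _
    have hexp : p - 1 - β < -1 := by linarith
    have hnn : 0 ≤ᵐ[volume.restrict (Set.Ioi tstar)] fun t : ℝ => t ^ (p-1-β) := by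
      filter_upwards [ae_restrict_mem measurableSet_Ioi] with t ht
      exact Real.rpow_nonneg (lt_trans htstar ht).le _
    rw [← ofReal_integral_eq_lintegral_ofReal (integrableOn_Ioi_rpow_of_lt hexp htstar) hnn]
    congr 1
    rw [integral_Ioi_rpow_of_lt hexp htstar]
    rw [show p - 1 - β + 1 = p - β by ring]
    rw [neg_div, ← div_neg]
    congr 1
    ring
  -- assemble
  have hlayer : (∫⁻ x, ENNReal.ofReal (u x ^ p) ∂μB) ≤
      ENNReal.ofReal (G * r ^ ((n:ℝ) - p*((n:ℝ)-2*s))) := by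
    rw [lintegral_rpow_eq_lintegral_meas_lt_mul μB hu0B humB hp0]
    have hsplitI : (∫⁻ t in Set.Ioi (0:ℝ), μB {a | t < u a} * ENNReal.ofReal (t ^ (p-1))) =
        (∫⁻ t in Set.Ioc 0 tstar, μB {a | t < u a} * ENNReal.ofReal (t ^ (p-1))) +
        (∫⁻ t in Set.Ioi tstar, μB {a | t < u a} * ENNReal.ofReal (t ^ (p-1))) := by
      rw [← Set.Ioc_union_Ioi_eq_Ioi htstar.le]
      exact lintegral_union measurableSet_Ioi (Set.Ioc_disjoint_Ioi le_rfl)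
    rw [hsplitI]
    calc ENNReal.ofReal p * ((∫⁻ t in Set.Ioc 0 tstar, μB {a | t < u a} *
            ENNReal.ofReal (t ^ (p-1))) +
          (∫⁻ t in Set.Ioi tstar, μB {a | t < u a} * ENNReal.ofReal (t ^ (p-1))))
        ≤ ENNReal.ofReal p * (ENNReal.ofReal (r ^ ((n:ℝ)) * ωr) * ENNReal.ofReal (tstar ^ p / p) +
            ENNReal.ofReal C₁ * ENNReal.ofReal (tstar ^ (p-β) / (β-p))) :=
          mul_le_mul_right (add_le_add hI1 hI2) _
      _ = ENNReal.ofReal (p * (r ^ ((n:ℝ)) * ωr * (tstar ^ p / p) +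
            C₁ * (tstar ^ (p-β) / (β-p)))) := by
          rw [← ENNReal.ofReal_mul (show (0:ℝ) ≤ r ^ ((n:ℝ)) * ωr by positivity),
            ← ENNReal.ofReal_mul hC₁pos.le,
            ← ENNReal.ofReal_add (by positivity)
              (mul_nonneg hC₁pos.le (div_nonneg (Real.rpow_nonneg htstar.le _) hβppos.le)),
            ← ENNReal.ofReal_mul hp0.le]
      _ ≤ ENNReal.ofReal (G * r ^ ((n:ℝ) - p*((n:ℝ)-2*s))) := by
          refine ENNReal.ofReal_le_ofReal (le_of_eq ?_)
          have hβp : β - p ≠ 0 := by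
            have : 0 < β - p := by linarith
            exact this.ne'
          have ht1 : tstar ^ p = r ^ (-((n:ℝ)-2*s)*p) := by
            rw [htstar_def, ← Real.rpow_mul hr.le]
          have hb : ((n:ℝ)-2*s) * β = n := by
            rw [hβval]
            field_simp
          have ht2 : tstar ^ (p-β) = r ^ ((n:ℝ) - p*((n:ℝ)-2*s)) := by
            rw [htstar_def, ← Real.rpow_mul hr.le]
            congr 1
            nlinarith [hb]
          have hr1 : r ^ ((n:ℝ)) * r ^ (-((n:ℝ)-2*s)*p) = r ^ ((n:ℝ) - p*((n:ℝ)-2*s)) := by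
            rw [← Real.rpow_add hr]
            congr 1
            ring
          rw [ht1, ht2, hG_def]
          set a₁ : ℝ := r ^ ((n:ℝ)) with ha₁
          set a₂ : ℝ := r ^ (-((n:ℝ)-2*s)*p) with ha₂
          set a₃ : ℝ := r ^ ((n:ℝ) - p*((n:ℝ)-2*s)) with ha₃
          have hstep : p * (a₁ * ωr * (a₂/p) + C₁ * (a₃/(β-p))) =
              ωr * (a₁*a₂) + p*C₁/(β-p)*a₃ := by
            field_simp
          rw [hstep, hr1]
          ring
  -- from the lintegral bound to the eLpNorm bound
  have hp_ne0 : ENNReal.ofReal p ≠ 0 := by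
    simp only [ne_eq, ENNReal.ofReal_eq_zero, not_le]
    exact hp0
  rw [eLpNorm_eq_lintegral_rpow_enorm_toReal hp_ne0 ENNReal.ofReal_ne_top,
    ENNReal.toReal_ofReal hp0.le]
  have hpt : (∫⁻ x, ‖u x‖ₑ ^ p ∂μB) = ∫⁻ x, ENNReal.ofReal (u x ^ p) ∂μB := by
    refine lintegral_congr_ae ?_
    filter_upwards [hu0B] with x hx
    rw [Real.enorm_eq_ofReal hx, ENNReal.ofReal_rpow_of_nonneg hx hp0.le]
  rw [hpt]
  have h1 := ENNReal.rpow_le_rpow hlayer (by positivity : (0:ℝ) ≤ 1/p)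
  refine le_trans h1 (le_of_eq ?_)
  rw [ENNReal.ofReal_rpow_of_nonneg (by positivity) (by positivity)]
  congr 1
  rw [Real.mul_rpow hGpos.le (Real.rpow_nonneg hr.le _), ← Real.rpow_mul hr.le]
  congr 2
  field_simp
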